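/- Branching distributivity preserves global traces: let G1 = p→q:{l_i : r→s:{l'_j : G_j}_{j∈J}}_{i∈I} be an outer branching between p and q each of whose branches performs the same inner branching between r and s with continuations G_j depending only on the inner label, and let G2 = r→s:{l'_j : p→q:{l_i : G_j}_{i∈I}}_{j∈J} be the type obtained by exchanging the two branchings; if {p,q} ∩ {r,s} = ∅ then Tr(G1) = Tr(G2). -/

import Mathlib

abbrev Label := ℕ

inductive VTy
  | bool | nat
deriving DecidableEq

inductive Msg
  | val (U : VTy)
  | lab (l : Label)
deriving DecidableEq

structure Pref where
  sender : ℕ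
  receiver : ℕ
  msg : Msg
deriving DecidableEq

def Pref.pid (g : Pref) : Set ℕ := {g.sender, g.receiver}

inductive Global
  | comm (g : Pref) (G : Global)
  | branch (p q : ℕ) (bs : List (Label × Global))
  | var (t : ℕ)
  | mu (t : ℕ) (G : Global)
  | gend

namespace Global

def subst (t : ℕ) (H : Global) : Global → Global
  | comm g G => comm g (subst t H G)
  | branch p q bs => branch p q (bs.attach.map fun ⟨⟨l, G⟩, h⟩ => (l, subst t H G))
  | var s => if s = t then H else var s
  | mu s G => if s = t then mu s G else mu s (subst t H G)
  | gend => gend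
decreasing_by
  all_goals simp_wf
  all_goals try (have := List.sizeOf_lt_of_mem h; simp only [Prod.mk.sizeOf_spec] at this)
  all_goals try simp only [Global.branch.sizeOf_spec, Global.mu.sizeOf_spec, Global.comm.sizeOf_spec] at *
  all_goals omega

end Global

inductive GStep : Global → Pref → Global → Prop
  | inter (g : Pref) (G : Global) :
      GStep (.comm g G) g G
  | selbra {p q : ℕ} {bs : List (Label × Global)} {l : Label} {Gk : Global} :
      (l, Gk) ∈ bs →
      GStep (.branch p q bs) ⟨p, q, .lab l⟩ Gk
  | iperm {G G' : Global} {g g' : Pref} :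
      GStep G g' G' → g.pid ∩ g'.pid = ∅ →
      GStep (.comm g G) g' (.comm g G')
  | sbperm {p q : ℕ} {bs bs' : List (Label × Global)} {g' : Pref} :
      bs.length = bs'.length →
      (∀ bb ∈ bs.zip bs', bb.1.1 = bb.2.1) →
      (∀ bb ∈ bs.zip bs', GStep bb.1.2 g' bb.2.2) →
      g'.pid ∩ ({p, q} : Set ℕ) = ∅ →
      GStep (.branch p q bs) g' (.branch p q bs')
  | recur {t : ℕ} {G G' : Global} {g : Pref} :
      GStep (Global.subst t (.mu t G) G) g G' →
      GStep (.mu t G) g G'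

inductive GSteps : Global → List Pref → Global → Prop
  | refl (G : Global) : GSteps G [] G
  | cons {G G₁ G₂ : Global} {g : Pref} {tr : List Pref} :
      GStep G g G₁ → GSteps G₁ tr G₂ → GSteps G (g :: tr) G₂

def GTraces (G : Global) : Set (List Pref) := {tr | ∃ G', GSteps G tr G'}

/-! ### Local types -/

inductive Local
  | send (q : ℕ) (m : Msg) (T : Local)
  | recv (p : ℕ) (m : Msg) (T : Local)
  | sel (q : ℕ) (bs : List (Label × Local))
  | bra (p : ℕ) (bs : List (Label × Local))
  | var (t : ℕ)
  | mu (t : ℕ) (T : Local)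
  | lend

namespace Local

def subst (t : ℕ) (H : Local) : Local → Local
  | send q m T => send q m (subst t H T)
  | recv p m T => recv p m (subst t H T)
  | sel q bs => sel q (bs.attach.map fun ⟨⟨l, T⟩, h⟩ => (l, subst t H T))
  | bra p bs => bra p (bs.attach.map fun ⟨⟨l, T⟩, h⟩ => (l, subst t H T))
  | var s => if s = t then H else var s
  | mu s T => if s = t then mu s T else mu s (subst t H T)
  | lend => lend
decreasing_by
  all_goals simp_wf
  all_goals try (have := List.sizeOf_lt_of_mem h; simp only [Prod.mk.sizeOf_spec] at this)
  all_goals try simp only [Local.sel.sizeOf_spec, Local.bra.sizeOf_spec, Local.mu.sizeOf_spec] at *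
  all_goals omega

end Local

/-- Local labels `ℓ ::= q!m | p?m`. -/
inductive LLabel
  | send (q : ℕ) (m : Msg)
  | recv (p : ℕ) (m : Msg)
deriving DecidableEq

/-- The labelled transition system over local types. -/
inductive LStep : Local → LLabel → Local → Prop
  | send {q : ℕ} {m : Msg} {T : Local} : LStep (.send q m T) (.send q m) T
  | recv {p : ℕ} {m : Msg} {T : Local} : LStep (.recv p m T) (.recv p m) T
  | sel {q : ℕ} {bs : List (Label × Local)} {l : Label} {T : Local} :
      (l, T) ∈ bs → LStep (.sel q bs) (.send q (.lab l)) T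
  | bra {p : ℕ} {bs : List (Label × Local)} {l : Label} {T : Local} :
      (l, T) ∈ bs → LStep (.bra p bs) (.recv p (.lab l)) T
  | recur {t : ℕ} {T T' : Local} {ℓ : LLabel} :
      LStep (Local.subst t (.mu t T) T) ℓ T' → LStep (.mu t T) ℓ T'

/-- The set of labels occurring in a list of local branches. -/
def labelsOf (bs : List (Label × Local)) : Set Label := {l | ∃ T, (l, T) ∈ bs}

/-! ### Merging of local types -/

mutual
  /-- The (partial, relationally presented) merge operator `T₁ ⊔ T₂ = T₃` on local types:
  homomorphic everywhere except at branchings, which are merged by taking the union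
  of branches, merging continuations of common labels. -/
  inductive Merge : Local → Local → Local → Prop
    | send {q m T₁ T₂ T₃} : Merge T₁ T₂ T₃ → Merge (.send q m T₁) (.send q m T₂) (.send q m T₃)
    | recv {p m T₁ T₂ T₃} : Merge T₁ T₂ T₃ → Merge (.recv p m T₁) (.recv p m T₂) (.recv p m T₃)
    | sel {q bs₁ bs₂ bs₃} : MergeBs bs₁ bs₂ bs₃ → Merge (.sel q bs₁) (.sel q bs₂) (.sel q bs₃)
    | bra {p : ℕ} {bs₁ bs₂ bs₃ : List (Label × Local)} :
        labelsOf bs₃ = labelsOf bs₁ ∪ labelsOf bs₂ →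
        (∀ l T₃, (l, T₃) ∈ bs₃ → MergeBranch bs₁ bs₂ l T₃) →
        Merge (.bra p bs₁) (.bra p bs₂) (.bra p bs₃)
    | var {t} : Merge (.var t) (.var t) (.var t)
    | mu {t T₁ T₂ T₃} : Merge T₁ T₂ T₃ → Merge (.mu t T₁) (.mu t T₂) (.mu t T₃)
    | lend : Merge .lend .lend .lend

  /-- Pointwise merging of selection branches (same labels in the same order). -/
  inductive MergeBs : List (Label × Local) → List (Label × Local) → List (Label × Local) → Prop
    | nil : MergeBs [] [] []
    | cons {l T₁ T₂ T₃ bs₁ bs₂ bs₃} :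
        Merge T₁ T₂ T₃ → MergeBs bs₁ bs₂ bs₃ →
        MergeBs ((l, T₁) :: bs₁) ((l, T₂) :: bs₂) ((l, T₃) :: bs₃)

  /-- How a branch `(l, T₃)` of a merged branching arises from the two merged lists. -/
  inductive MergeBranch : List (Label × Local) → List (Label × Local) → Label → Local → Prop
    | both {bs₁ bs₂ l T₁ T₂ T₃} :
        (l, T₁) ∈ bs₁ → (l, T₂) ∈ bs₂ → Merge T₁ T₂ T₃ → MergeBranch bs₁ bs₂ l T₃
    | left {bs₁ bs₂ l T₃} :
        (l, T₃) ∈ bs₁ → l ∉ labelsOf bs₂ → MergeBranch bs₁ bs₂ l T₃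
    | right {bs₁ bs₂ l T₃} :
        (l, T₃) ∈ bs₂ → l ∉ labelsOf bs₁ → MergeBranch bs₁ bs₂ l T₃
end

/-- Iterated merge `⊔ᵢ Tᵢ` of a (nonempty) family of local types. -/
inductive MergeList : List Local → Local → Prop
  | single {T} : MergeList [T] T
  | cons {T T' T'' : Local} {Ts : List Local} :
      MergeList Ts T' → Merge T T' T'' → MergeList (T :: Ts) T''

/-! ### Projection of global types onto participants -/

/-- `Proj G r T` is the graph of the (partial) projection function `⌊G⌋r = T`. -/
inductive Proj : Global → ℕ → Local → Prop
  | comm_send {g : Pref} {G : Global} {r : ℕ} {T : Local} :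
      r = g.sender → r ≠ g.receiver → Proj G r T →
      Proj (.comm g G) r (.send g.receiver g.msg T)
  | comm_recv {g : Pref} {G : Global} {r : ℕ} {T : Local} :
      r = g.receiver → r ≠ g.sender → Proj G r T →
      Proj (.comm g G) r (.recv g.sender g.msg T)
  | comm_skip {g : Pref} {G : Global} {r : ℕ} {T : Local} :
      r ≠ g.sender → r ≠ g.receiver → Proj G r T →
      Proj (.comm g G) r T
  | branch_sel {p q : ℕ} {bs : List (Label × Global)} {bs' : List (Label × Local)} :
      p ≠ q →
      bs.length = bs'.length →
      (∀ bb ∈ bs.zip bs', bb.1.1 = bb.2.1) →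
      (∀ bb ∈ bs.zip bs', Proj bb.1.2 p bb.2.2) →
      Proj (.branch p q bs) p (.sel q bs')
  | branch_bra {p q : ℕ} {bs : List (Label × Global)} {bs' : List (Label × Local)} :
      p ≠ q →
      bs.length = bs'.length →
      (∀ bb ∈ bs.zip bs', bb.1.1 = bb.2.1) →
      (∀ bb ∈ bs.zip bs', Proj bb.1.2 q bb.2.2) →
      Proj (.branch p q bs) q (.bra p bs')
  | branch_merge {p q r : ℕ} {bs : List (Label × Global)} {Ts : List Local} {T : Local} :
      r ≠ p → r ≠ q →
      bs.length = Ts.length →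
      (∀ bb ∈ bs.zip Ts, Proj bb.1.2 r bb.2) →
      MergeList Ts T →
      Proj (.branch p q bs) r T
  | mu_proj {t : ℕ} {G : Global} {r : ℕ} {T : Local} :
      Proj G r T → T ≠ .var t → Proj (.mu t G) r (.mu t T)
  | mu_end {t : ℕ} {G : Global} {r : ℕ} :
      Proj G r (.var t) → Proj (.mu t G) r .lend
  | var {t r} : Proj (.var t) r (.var t)
  | gend {r} : Proj .gend r .lend

/-! ### Isomorphism of global types -/

/-- `Iso G₁ G₂` (`G₁ ≅ G₂`): the smallest congruence on global types containing
prefix commutativity, branching, and branching distributivity (branch index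
sets are nonempty, as usual for multiparty session types). -/
inductive Iso : Global → Global → Prop
  | refl (G : Global) : Iso G G
  | symm {G G'} : Iso G G' → Iso G' G
  | trans {G G' G''} : Iso G G' → Iso G' G'' → Iso G G''
  | comm_cong {g : Pref} {G G'} : Iso G G' → Iso (.comm g G) (.comm g G')
  | branch_cong {p q : ℕ} {bs bs' : List (Label × Global)} :
      bs.length = bs'.length →
      (∀ bb ∈ bs.zip bs', bb.1.1 = bb.2.1) →
      (∀ bb ∈ bs.zip bs', Iso bb.1.2 bb.2.2) →
      Iso (.branch p q bs) (.branch p q bs')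
  | mu_cong {t : ℕ} {G G'} : Iso G G' → Iso (.mu t G) (.mu t G')
  | swap {g₁ g₂ : Pref} {G : Global} :
      g₁.pid ∩ g₂.pid = ∅ →
      Iso (.comm g₁ (.comm g₂ G)) (.comm g₂ (.comm g₁ G))
  | branching {p q : ℕ} {g : Pref} {bs : List (Label × Global)} :
      bs ≠ [] →
      g.pid ∩ ({p, q} : Set ℕ) = ∅ →
      Iso (.branch p q (bs.map fun b => (b.1, .comm g b.2))) (.comm g (.branch p q bs))
  | distrib {p q r s : ℕ} {lsI : List Label} {bsJ : List (Label × Global)} :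
      lsI ≠ [] → bsJ ≠ [] →
      ({p, q} : Set ℕ) ∩ ({r, s} : Set ℕ) = ∅ →
      Iso (.branch p q (lsI.map fun l => (l, .branch r s bsJ)))
          (.branch r s (bsJ.map fun bj => (bj.1, .branch p q (lsI.map fun l => (l, bj.2)))))

/-! ### Configurations and their synchronous semantics -/

/-- A configuration: a family of local types, one per participant. -/
abbrev Config := ℕ → Local

/-- The synchronous transition `[Synch]` between configurations, labelled by
the communication `p → q : m` (the pair of dual local labels `q!m · p?m`). -/
inductive CStep : Config → Pref → Config → Prop
  | synch {Δ Δ' : Config} {p q : ℕ} {m : Msg} :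
      p ≠ q →
      LStep (Δ p) (.send q m) (Δ' p) →
      LStep (Δ q) (.recv p m) (Δ' q) →
      (∀ r, r ≠ p → r ≠ q → Δ' r = Δ r) →
      CStep Δ ⟨p, q, m⟩ Δ'

/-- Multi-step synchronous execution of a configuration. -/
inductive CSteps : Config → List Pref → Config → Prop
  | refl (Δ : Config) : CSteps Δ [] Δ
  | cons {Δ Δ₁ Δ₂ : Config} {g : Pref} {tr : List Pref} :
      CStep Δ g Δ₁ → CSteps Δ₁ tr Δ₂ → CSteps Δ (g :: tr) Δ₂

/-- The configuration trace set `T_S(Δ)`, identifying the synchronisation label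
`q!m · p?m` with the global label `p → q : m`. -/
def CTraces (Δ : Config) : Set (List Pref) := {tr | ∃ Δ', CSteps Δ tr Δ'}

/-- Configuration traces `σ`: per-participant sequences of local labels. -/
abbrev CTrace := ℕ → List LLabel

/-- The execution relation `Δ ↝^σ_synch Δ'`, accumulating per participant the
local labels of a sequence of `[Synch]` steps. -/
inductive Exec : Config → CTrace → Config → Prop
  | refl (Δ : Config) : Exec Δ (fun _ => []) Δ
  | step {Δ Δ₁ Δ₂ : Config} {σ : CTrace} {g : Pref} :
      Exec Δ σ Δ₁ → CStep Δ₁ g Δ₂ →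
      Exec Δ
        (fun r =>
          if r = g.sender then σ r ++ [.send g.receiver g.msg]
          else if r = g.receiver then σ r ++ [.recv g.sender g.msg]
          else σ r)
        Δ₂

/-- Terminated configurations: no `[Synch]` transition is available. -/
def Terminated (Δ : Config) : Prop := ∀ g Δ', ¬ CStep Δ g Δ'

/-- The denotation of a configuration: its set of terminated traces. -/
def Denot (Δ : Config) : Set CTrace := {σ | ∃ Δ', Exec Δ σ Δ' ∧ Terminated Δ'}

section TraceAux

def HasTr (G : Global) (u : List Pref) : Prop := ∃ H, GSteps G u H

lemma gsteps_append {G G₁ G₂ : Global} {u v : List Pref}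
    (h₁ : GSteps G u G₁) (h₂ : GSteps G₁ v G₂) : GSteps G (u ++ v) G₂ := by
  induction h₁ with
  | refl => simpa
  | cons hs _ ih => exact GSteps.cons hs (ih h₂)

lemma gsteps_split {G G₂ : Global} : ∀ {u v : List Pref}, GSteps G (u ++ v) G₂ →
    ∃ G₁, GSteps G u G₁ ∧ GSteps G₁ v G₂ := by
  intro u
  induction u generalizing G with
  | nil => intro v h; exact ⟨G, .refl G, h⟩
  | cons g u ih =>
    intro v h
    rw [List.cons_append] at h
    cases h with
    | cons hs hrest =>
      obtain ⟨G₁, h1, h2⟩ := ih hrest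
      exact ⟨G₁, .cons hs h1, h2⟩

lemma hasTr_prefix {G : Global} {u v : List Pref} (h : HasTr G (u ++ v)) : HasTr G u := by
  obtain ⟨H, hH⟩ := h
  obtain ⟨G₁, h1, _⟩ := gsteps_split hH
  exact ⟨G₁, h1⟩

lemma zip_mem_left {α β : Type _} : ∀ {as : List α} {bs : List β}, as.length = bs.length →
    ∀ {a}, a ∈ as → ∃ b ∈ bs, (a, b) ∈ as.zip bs := by
  intro as
  induction as with
  | nil => intro bs _ a ha; cases ha
  | cons x t ih =>
    intro bs hlen a ha
    cases bs with
    | nil => simp at hlen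
    | cons y u =>
      simp only [List.length_cons, add_left_inj] at hlen
      rcases List.mem_cons.mp ha with rfl | ha
      · exact ⟨y, List.mem_cons_self, by simp [List.zip_cons_cons]⟩
      · obtain ⟨b, hb, hab⟩ := ih hlen ha
        exact ⟨b, List.mem_cons_of_mem _ hb,
          by rw [List.zip_cons_cons]; exact List.mem_cons_of_mem _ hab⟩

lemma zip_mem_right {α β : Type _} : ∀ {as : List α} {bs : List β}, as.length = bs.length →
    ∀ {b}, b ∈ bs → ∃ a ∈ as, (a, b) ∈ as.zip bs := by
  intro as
  induction as with
  | nil => intro bs hlen b hb; cases bs with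
    | nil => cases hb
    | cons y u => simp at hlen
  | cons x t ih =>
    intro bs hlen b hb
    cases bs with
    | nil => cases hb
    | cons y u =>
      simp only [List.length_cons, add_left_inj] at hlen
      rcases List.mem_cons.mp hb with rfl | hb
      · exact ⟨x, List.mem_cons_self, by simp [List.zip_cons_cons]⟩
      · obtain ⟨a, ha, hab⟩ := ih hlen hb
        exact ⟨a, List.mem_cons_of_mem _ ha,
          by rw [List.zip_cons_cons]; exact List.mem_cons_of_mem _ hab⟩

lemma buildAll {g : Pref} (P : Global → Prop) :
    ∀ (cs : List (Label × Global)),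
      (∀ b ∈ cs, ∃ G₁, GStep b.2 g G₁ ∧ P G₁) →
      ∃ cs' : List (Label × Global), cs.length = cs'.length ∧
        (∀ bb ∈ cs.zip cs', bb.1.1 = bb.2.1) ∧
        (∀ bb ∈ cs.zip cs', GStep bb.1.2 g bb.2.2) ∧
        (∀ b' ∈ cs', P b'.2) := by
  intro cs
  induction cs with
  | nil => intro _; exact ⟨[], rfl, by simp, by simp, by simp⟩
  | cons b t ih =>
    intro h
    obtain ⟨G₁, hs, hP⟩ := h b (List.mem_cons_self)
    obtain ⟨t', hlen, hlab, hstep, hP'⟩ := ih (fun b hb => h b (List.mem_cons_of_mem _ hb))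
    refine ⟨(b.1, G₁) :: t', by simp [hlen], ?_, ?_, ?_⟩
    · intro bb hbb
      rw [List.zip_cons_cons, List.mem_cons] at hbb
      rcases hbb with rfl | hbb
      · rfl
      · exact hlab _ hbb
    · intro bb hbb
      rw [List.zip_cons_cons, List.mem_cons] at hbb
      rcases hbb with rfl | hbb
      · exact hs
      · exact hstep _ hbb
    · intro b' hb'
      rcases List.mem_cons.mp hb' with rfl | hb'
      · exact hP
      · exact hP' _ hb'

lemma buildWith {g : Pref} (P : Global → Prop) {l : Label} {G G₁ : Global} :
    ∀ {cs : List (Label × Global)}, (l, G) ∈ cs → GStep G g G₁ → P G₁ →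
      (∀ b ∈ cs, ∃ G₂, GStep b.2 g G₂ ∧ P G₂) →
      ∃ cs' : List (Label × Global), cs.length = cs'.length ∧
        (∀ bb ∈ cs.zip cs', bb.1.1 = bb.2.1) ∧
        (∀ bb ∈ cs.zip cs', GStep bb.1.2 g bb.2.2) ∧
        (l, G₁) ∈ cs' ∧ (∀ b' ∈ cs', P b'.2) := by
  intro cs hmem hG hP hall
  induction cs with
  | nil => cases hmem
  | cons b t ih =>
    rcases List.mem_cons.mp hmem with heq | hmem'
    · subst heq
      obtain ⟨t', hlen, hlab, hstep, hP'⟩ :=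
        buildAll P t (fun b hb => hall b (List.mem_cons_of_mem _ hb))
      refine ⟨(l, G₁) :: t', by simp [hlen], ?_, ?_, List.mem_cons_self, ?_⟩
      · intro bb hbb
        rw [List.zip_cons_cons, List.mem_cons] at hbb
        rcases hbb with rfl | hbb
        · rfl
        · exact hlab _ hbb
      · intro bb hbb
        rw [List.zip_cons_cons, List.mem_cons] at hbb
        rcases hbb with rfl | hbb
        · exact hG
        · exact hstep _ hbb
      · intro b' hb'
        rcases List.mem_cons.mp hb' with rfl | hb'
        · exact hP
        · exact hP' _ hb'
    · obtain ⟨t', hlen, hlab, hstep, hmem₁, hP'⟩ :=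
        ih hmem' (fun b hb => hall b (List.mem_cons_of_mem _ hb))
      obtain ⟨G₂, hs₂, hP₂⟩ := hall b (List.mem_cons_self)
      refine ⟨(b.1, G₂) :: t', by simp [hlen], ?_, ?_, List.mem_cons_of_mem _ hmem₁, ?_⟩
      · intro bb hbb
        rw [List.zip_cons_cons, List.mem_cons] at hbb
        rcases hbb with rfl | hbb
        · rfl
        · exact hlab _ hbb
      · intro bb hbb
        rw [List.zip_cons_cons, List.mem_cons] at hbb
        rcases hbb with rfl | hbb
        · exact hs₂
        · exact hstep _ hbb
      · intro b' hb'
        rcases List.mem_cons.mp hb' with rfl | hb'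
        · exact hP₂
        · exact hP' _ hb'

/-- Forward characterization of traces of a branching. -/
lemma bchar_of {p q : ℕ} {G : Global} {tr : List Pref} {G' : Global}
    (h : GSteps G tr G') : ∀ (cs : List (Label × Global)), G = .branch p q cs →
    ∃ u v, tr = u ++ v ∧ (∀ g ∈ u, g.pid ∩ ({p, q} : Set ℕ) = ∅) ∧
      (∀ b ∈ cs, HasTr b.2 u) ∧
      (v = [] ∨ ∃ l w G₀, v = ⟨p, q, .lab l⟩ :: w ∧ (l, G₀) ∈ cs ∧ HasTr G₀ (u ++ w)) := by
  induction h with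
  | refl => intro cs _; exact ⟨[], [], rfl, by simp, fun b _ => ⟨b.2, .refl _⟩, Or.inl rfl⟩
  | cons hs hrest ih =>
    intro cs hEq
    subst hEq
    cases hs with
    | selbra hmem =>
      exact ⟨[], _, rfl, by simp, fun b _ => ⟨b.2, .refl _⟩,
        Or.inr ⟨_, _, _, rfl, hmem, ⟨_, hrest⟩⟩⟩
    | sbperm hlen hlab hstep hd =>
      obtain ⟨u, v, htr, hu, hall, hv⟩ := ih _ rfl
      subst htr
      refine ⟨_ :: u, v, rfl, ?_, ?_, ?_⟩
      · intro g hg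
        rcases List.mem_cons.mp hg with rfl | hg
        · exact hd
        · exact hu g hg
      · intro b hb
        obtain ⟨b', hb', hbb⟩ := zip_mem_left hlen hb
        obtain ⟨H, hH⟩ := hall b' hb'
        exact ⟨H, .cons (hstep _ hbb) hH⟩
      · rcases hv with rfl | ⟨l, w, G₀, rfl, hmem, hG₀⟩
        · exact Or.inl rfl
        · obtain ⟨⟨b1, b2⟩, hbmem, hbb⟩ := zip_mem_right hlen hmem
          have hl : b1 = l := hlab _ hbb
          subst hl
          obtain ⟨H, hH⟩ := hG₀
          exact Or.inr ⟨b1, w, b2, rfl, hbmem, ⟨H, .cons (hstep _ hbb) hH⟩⟩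

/-- Backward: build a branching trace from the characterization. -/
lemma steps_of_bchar {p q : ℕ} :
    ∀ (u : List Pref) (cs : List (Label × Global)) (v : List Pref),
      (∀ g ∈ u, g.pid ∩ ({p, q} : Set ℕ) = ∅) →
      (∀ b ∈ cs, HasTr b.2 u) →
      (v = [] ∨ ∃ l w G₀, v = ⟨p, q, .lab l⟩ :: w ∧ (l, G₀) ∈ cs ∧ HasTr G₀ (u ++ w)) →
      HasTr (.branch p q cs) (u ++ v) := by
  intro u
  induction u with
  | nil =>
    intro cs v _ _ hv
    rcases hv with rfl | ⟨l, w, G₀, rfl, hmem, H, hH⟩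
    · exact ⟨_, .refl _⟩
    · exact ⟨H, .cons (.selbra hmem) hH⟩
  | cons g u ih =>
    intro cs v hu hall hv
    have hgd : g.pid ∩ ({p, q} : Set ℕ) = ∅ := hu g (List.mem_cons_self)
    have hu' : ∀ g' ∈ u, g'.pid ∩ ({p, q} : Set ℕ) = ∅ :=
      fun g' hg' => hu g' (List.mem_cons_of_mem _ hg')
    have hall' : ∀ b ∈ cs, ∃ G₁, GStep b.2 g G₁ ∧ HasTr G₁ u := by
      intro b hb
      obtain ⟨H, hH⟩ := hall b hb
      cases hH with
      | cons hs hrest => exact ⟨_, hs, _, hrest⟩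
    rcases hv with rfl | ⟨l, w, G₀, rfl, hmem, H, hH⟩
    · obtain ⟨cs', hlen, hlab, hstep, hP⟩ := buildAll (fun X => HasTr X u) cs hall'
      obtain ⟨H, hH⟩ := ih cs' [] hu' hP (Or.inl rfl)
      exact ⟨H, .cons (.sbperm hlen hlab hstep hgd) hH⟩
    · rw [List.cons_append] at hH
      cases hH with
      | cons hs hrest =>
        have hP₁ : HasTr _ u := hasTr_prefix ⟨H, hrest⟩
        obtain ⟨cs', hlen, hlab, hstep, hmem', hP⟩ :=
          buildWith (fun X => HasTr X u) hmem hs hP₁ hall'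
        obtain ⟨H', hH'⟩ := ih cs' (⟨p, q, .lab l⟩ :: w) hu' hP
          (Or.inr ⟨l, w, _, rfl, hmem', ⟨H, hrest⟩⟩)
        exact ⟨H', .cons (.sbperm hlen hlab hstep hgd) hH'⟩

lemma steps_of_bchar' {p q : ℕ} {cs : List (Label × Global)} {t u v : List Pref}
    (ht : t = u ++ v)
    (h1 : ∀ g ∈ u, g.pid ∩ ({p, q} : Set ℕ) = ∅)
    (h2 : ∀ b ∈ cs, HasTr b.2 u)
    (h3 : v = [] ∨ ∃ l w G₀, v = ⟨p, q, .lab l⟩ :: w ∧ (l, G₀) ∈ cs ∧ HasTr G₀ (u ++ w)) :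
    HasTr (.branch p q cs) t := ht ▸ steps_of_bchar u cs v h1 h2 h3

lemma split_unique {P : Set ℕ} :
    ∀ {u₁ u₂ : List Pref} {g₁ g₂ : Pref} {w₁ w₂ : List Pref},
      u₁ ++ g₁ :: w₁ = u₂ ++ g₂ :: w₂ →
      (∀ g ∈ u₁, g.pid ∩ P = ∅) → (∀ g ∈ u₂, g.pid ∩ P = ∅) →
      g₁.pid ∩ P ≠ ∅ → g₂.pid ∩ P ≠ ∅ →
      u₁ = u₂ ∧ g₁ = g₂ ∧ w₁ = w₂ := by
  intro u₁
  induction u₁ with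
  | nil =>
    intro u₂ g₁ g₂ w₁ w₂ h h1 h2 hg1 hg2
    cases u₂ with
    | nil => simpa using h
    | cons x t =>
      simp only [List.nil_append, List.cons_append, List.cons.injEq] at h
      exact absurd (h2 x (List.mem_cons_self)) (by rw [← h.1]; exact hg1)
  | cons x t ih =>
    intro u₂ g₁ g₂ w₁ w₂ h h1 h2 hg1 hg2
    cases u₂ with
    | nil =>
      simp only [List.cons_append, List.nil_append, List.cons.injEq] at h
      exact absurd (h1 x (List.mem_cons_self)) (by rw [h.1]; exact hg2)
    | cons y t₂ =>
      simp only [List.cons_append, List.cons.injEq] at h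
      obtain ⟨rfl, h'⟩ := h
      obtain ⟨e1, e2, e3⟩ := ih h' (fun g hg => h1 g (List.mem_cons_of_mem _ hg))
        (fun g hg => h2 g (List.mem_cons_of_mem _ hg)) hg1 hg2
      exact ⟨by rw [e1], e2, e3⟩

lemma pref_touch (a b : ℕ) (m : Msg) : (Pref.mk a b m).pid ∩ ({a, b} : Set ℕ) ≠ ∅ := by
  intro h
  have : a ∈ (Pref.mk a b m).pid ∩ ({a, b} : Set ℕ) := by
    constructor
    · exact Or.inl rfl
    · exact Or.inl rfl
  rw [h] at this
  exact this

end TraceAux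

section TraceAux2

lemma hasTr_cast {G : Global} {a b : List Pref} (h : a = b) (hb : HasTr G b) : HasTr G a :=
  h ▸ hb

lemma list_split {α : Type _} {u w u₁ w₁ : List α} {x : α}
    (h : u ++ w = u₁ ++ x :: w₁) :
    (∃ t, u₁ = u ++ t ∧ w = t ++ x :: w₁) ∨ (∃ t, u = u₁ ++ x :: t ∧ w₁ = t ++ w) := by
  rcases List.append_eq_append_iff.mp h with ⟨t, h1, h2⟩ | ⟨t, h1, h2⟩
  · exact Or.inl ⟨t, h1, h2⟩
  · cases t with
    | nil => exact Or.inl ⟨[], by simpa using h1.symm, by simpa using h2.symm⟩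
    | cons g t₀ =>
      rw [List.cons_append] at h2
      injection h2 with e1 e2
      exact Or.inr ⟨t₀, by rw [h1, e1], e2⟩

end TraceAux2

/-- Branching distributivity preserves global traces: with
`G₁ = p→q:{l_i : r→s:{l'_j : G_j}_{j∈J}}_{i∈I}` and
`G₂ = r→s:{l'_j : p→q:{l_i : G_j}_{i∈I}}_{j∈J}` (`I`, `J` nonempty),
if `{p,q} ∩ {r,s} = ∅` then `Tr(G₁) = Tr(G₂)`. -/
theorem branching_distributivity_preserves_traces
    (p q r s : ℕ) (lsI : List Label) (bsJ : List (Label × Global))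
    (hI : lsI ≠ []) (hJ : bsJ ≠ [])
    (hdisj : ({p, q} : Set ℕ) ∩ ({r, s} : Set ℕ) = ∅) :
    GTraces (.branch p q (lsI.map fun l => (l, .branch r s bsJ)))
      = GTraces (.branch r s (bsJ.map fun bj =>
          (bj.1, .branch p q (lsI.map fun l => (l, bj.2))))) := by
  have hdisj' : ({r, s} : Set ℕ) ∩ ({p, q} : Set ℕ) = ∅ := by rw [Set.inter_comm]; exact hdisj
  have hpidPQ : ∀ m : Msg, (Pref.mk p q m).pid ∩ ({r, s} : Set ℕ) = ∅ := fun _ => hdisj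
  have hpidRS : ∀ m : Msg, (Pref.mk r s m).pid ∩ ({p, q} : Set ℕ) = ∅ := fun _ => hdisj'
  obtain ⟨l₀, hl₀⟩ := List.exists_mem_of_ne_nil lsI hI
  have memMapB : ∀ {l : Label} {G c : Global},
      (l, G) ∈ lsI.map (fun l => (l, c)) → l ∈ lsI ∧ G = c := by
    intro l G c h
    obtain ⟨a, ha, heq⟩ := List.mem_map.mp h
    injection heq with h1 h2
    exact ⟨h1 ▸ ha, h2.symm⟩
  have memMap2 : ∀ {l' : Label} {X : Global},
      (l', X) ∈ bsJ.map (fun bj => (bj.1, Global.branch p q (lsI.map fun l => (l, bj.2)))) →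
      ∃ c, (l', c) ∈ bsJ ∧ X = Global.branch p q (lsI.map fun l => (l, c)) := by
    intro l' X h
    obtain ⟨⟨a, c⟩, ha, heq⟩ := List.mem_map.mp h
    injection heq with h1 h2
    exact ⟨c, h1 ▸ ha, h2.symm⟩
  have allconst : ∀ (c : Global) (x : List Pref), HasTr c x →
      ∀ b ∈ lsI.map (fun l => (l, c)), HasTr b.2 x := by
    rintro c x hx ⟨bl, bG⟩ hb
    obtain ⟨-, rfl⟩ := memMapB hb
    exact hx
  ext tr
  constructor
  · -- G1 ⇒ G2
    rintro ⟨G', h⟩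
    obtain ⟨u, v, rfl, hu, hall, hv⟩ := bchar_of h _ rfl
    have hBu : HasTr (Global.branch r s bsJ) u :=
      hall (l₀, Global.branch r s bsJ) (List.mem_map_of_mem hl₀)
    rcases hv with rfl | ⟨l, w, G₀, rfl, hmemG₀, hBw⟩
    · -- v = []
      obtain ⟨H, hH⟩ := hBu
      obtain ⟨u₁, v₁, hEq, hu₁, hallJ₁, hv₁⟩ := bchar_of hH _ rfl
      rcases hv₁ with rfl | ⟨l', w₁, c, rfl, hmemc, hcw⟩
      · rw [List.append_nil] at hEq
        subst hEq
        refine steps_of_bchar' (u := u) (v := []) (by simp) hu₁ ?_ (Or.inl rfl)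
        rintro ⟨bl, X⟩ hb
        obtain ⟨c, hc, rfl⟩ := memMap2 hb
        exact steps_of_bchar' (u := u) (v := []) (by simp) hu
          (allconst c _ (hallJ₁ _ hc)) (Or.inl rfl)
      · -- u = u₁ ++ gRS l' :: w₁
        subst hEq
        rw [List.forall_mem_append, List.forall_mem_cons] at hu
        refine steps_of_bchar' (u := u₁) (v := Pref.mk r s (.lab l') :: w₁) (by simp) hu₁ ?_ ?_
        · rintro ⟨bl, X⟩ hb
          obtain ⟨c₀, hc₀, rfl⟩ := memMap2 hb
          exact steps_of_bchar' (u := u₁) (v := []) (by simp) hu.1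
            (allconst c₀ _ (hallJ₁ _ hc₀)) (Or.inl rfl)
        · refine Or.inr ⟨l', w₁, _, rfl, List.mem_map_of_mem hmemc, ?_⟩
          refine steps_of_bchar' (u := u₁ ++ w₁) (v := []) (by simp) ?_
            (allconst c _ hcw) (Or.inl rfl)
          rw [List.forall_mem_append]
          exact ⟨hu.1, hu.2.2⟩
    · -- v = gPQ l :: w
      obtain ⟨hl, hG₀⟩ := memMapB hmemG₀
      subst hG₀
      obtain ⟨H, hH⟩ := hBw
      obtain ⟨u₁, v₁, hEq, hu₁, hallJ₁, hv₁⟩ := bchar_of hH _ rfl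
      rcases hv₁ with rfl | ⟨l', w₁, c, rfl, hmemc, hcw⟩
      · rw [List.append_nil] at hEq
        subst hEq
        rw [List.forall_mem_append] at hu₁
        refine steps_of_bchar' (u := u ++ Pref.mk p q (.lab l) :: w) (v := [])
          (by simp) ?_ ?_ (Or.inl rfl)
        · rw [List.forall_mem_append, List.forall_mem_cons]
          exact ⟨hu₁.1, hpidPQ _, hu₁.2⟩
        · rintro ⟨bl, X⟩ hb
          obtain ⟨c₀, hc₀, rfl⟩ := memMap2 hb
          refine steps_of_bchar' (u := u) (v := Pref.mk p q (.lab l) :: w) rfl hu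
            (allconst c₀ _ (hasTr_prefix (hallJ₁ _ hc₀))) ?_
          exact Or.inr ⟨l, w, c₀, rfl, List.mem_map_of_mem hl, hallJ₁ _ hc₀⟩
      · rcases list_split hEq with ⟨m, ht1, ht2⟩ | ⟨m, ht1, ht2⟩
        · -- gRS in w : u₁ = u ++ m, w = m ++ gRS::w₁
          subst ht1; subst ht2
          rw [List.forall_mem_append] at hu₁
          refine steps_of_bchar' (u := u ++ Pref.mk p q (.lab l) :: m)
            (v := Pref.mk r s (.lab l') :: w₁) (by simp) ?_ ?_ ?_
          · rw [List.forall_mem_append, List.forall_mem_cons]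
            exact ⟨hu₁.1, hpidPQ _, hu₁.2⟩
          · rintro ⟨bl, X⟩ hb
            obtain ⟨c₀, hc₀, rfl⟩ := memMap2 hb
            refine steps_of_bchar' (u := u) (v := Pref.mk p q (.lab l) :: m) rfl hu
              (allconst c₀ _ (hasTr_prefix (hallJ₁ _ hc₀))) ?_
            exact Or.inr ⟨l, m, c₀, rfl, List.mem_map_of_mem hl, hallJ₁ _ hc₀⟩
          · refine Or.inr ⟨l', w₁, _, rfl, List.mem_map_of_mem hmemc, ?_⟩
            refine steps_of_bchar' (u := u) (v := Pref.mk p q (.lab l) :: (m ++ w₁))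
              (by simp) hu ?_ ?_
            · exact allconst c _ (hasTr_prefix (hasTr_cast (by simp) hcw :
                HasTr c (u ++ (m ++ w₁))))
            · exact Or.inr ⟨l, m ++ w₁, c, rfl, List.mem_map_of_mem hl,
                hasTr_cast (by simp) hcw⟩
        · -- gRS in u : u = u₁ ++ gRS::m, w₁ = m ++ w
          subst ht1; subst ht2
          rw [List.forall_mem_append, List.forall_mem_cons] at hu
          refine steps_of_bchar' (u := u₁)
            (v := Pref.mk r s (.lab l') :: (m ++ Pref.mk p q (.lab l) :: w))
            (by simp) hu₁ ?_ ?_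
          · rintro ⟨bl, X⟩ hb
            obtain ⟨c₀, hc₀, rfl⟩ := memMap2 hb
            exact steps_of_bchar' (u := u₁) (v := []) (by simp) hu.1
              (allconst c₀ _ (hallJ₁ _ hc₀)) (Or.inl rfl)
          · refine Or.inr ⟨l', m ++ Pref.mk p q (.lab l) :: w, _, rfl,
              List.mem_map_of_mem hmemc, ?_⟩
            refine steps_of_bchar' (u := u₁ ++ m) (v := Pref.mk p q (.lab l) :: w)
              (by simp) ?_ ?_ ?_
            · rw [List.forall_mem_append]
              exact ⟨hu.1, hu.2.2⟩
            · exact allconst c _ (hasTr_prefix (hasTr_cast (by simp) hcw :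
                HasTr c ((u₁ ++ m) ++ w)))
            · exact Or.inr ⟨l, w, c, rfl, List.mem_map_of_mem hl,
                hasTr_cast (by simp) hcw⟩
  · -- G2 ⇒ G1
    rintro ⟨G', h⟩
    obtain ⟨u, v, rfl, hu, hall, hv⟩ := bchar_of h _ rfl
    have hallJ : ∀ bj ∈ bsJ, HasTr (Global.branch p q (lsI.map fun l => (l, bj.2))) u :=
      fun bj hbj => hall _ (List.mem_map_of_mem hbj)
    have V1 : ∀ (x : List Pref), (∀ g ∈ x, g.pid ∩ ({p, q} : Set ℕ) = ∅) →
        (∀ bj ∈ bsJ, HasTr (Global.branch p q (lsI.map fun l => (l, bj.2))) x) →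
        ∀ bj ∈ bsJ, HasTr bj.2 x := by
      intro x hx hA bj hbj
      obtain ⟨H, hH⟩ := hA bj hbj
      obtain ⟨u₁, v₁, hEq, hu₁, hallb, hv₁⟩ := bchar_of hH _ rfl
      rcases hv₁ with rfl | ⟨lb, wb, Gb, rfl, hmemb, hb⟩
      · rw [List.append_nil] at hEq
        subst hEq
        exact hallb (l₀, bj.2) (List.mem_map_of_mem hl₀)
      · refine absurd (hx (Pref.mk p q (.lab lb)) ?_) (pref_touch p q (.lab lb))
        rw [hEq]
        exact List.mem_append_right _ (List.mem_cons_self)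
    have V2 : ∀ (u₁ m : List Pref) (l : Label),
        (∀ g ∈ u₁, g.pid ∩ ({p, q} : Set ℕ) = ∅) →
        (∀ bj ∈ bsJ, HasTr (Global.branch p q (lsI.map fun l => (l, bj.2)))
          (u₁ ++ Pref.mk p q (.lab l) :: m)) →
        ∀ bj ∈ bsJ, HasTr bj.2 u₁ ∧ HasTr bj.2 (u₁ ++ m) := by
      intro u₁ m l hu₁ hA bj hbj
      obtain ⟨H, hH⟩ := hA bj hbj
      obtain ⟨u₂, v₂, hEq, hu₂, hallb, hv₂⟩ := bchar_of hH _ rfl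
      rcases hv₂ with rfl | ⟨lb, wb, Gb, rfl, hmemb, hb⟩
      · rw [List.append_nil] at hEq
        refine absurd (hu₂ (Pref.mk p q (.lab l)) ?_) (pref_touch p q (.lab l))
        rw [← hEq]
        exact List.mem_append_right _ (List.mem_cons_self)
      · obtain ⟨e1, e2, e3⟩ := split_unique hEq hu₁ hu₂
          (pref_touch p q (.lab l)) (pref_touch p q (.lab lb))
        obtain ⟨-, hGb⟩ := memMapB hmemb
        subst hGb
        constructor
        · rw [e1]
          exact hallb (l₀, bj.2) (List.mem_map_of_mem hl₀)
        · rw [e1, e3]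
          exact hb
    rcases hv with rfl | ⟨l', w, X, rfl, hmemX, hXw⟩
    · -- v = []
      obtain ⟨bj₀, hbj₀⟩ := List.exists_mem_of_ne_nil bsJ hJ
      obtain ⟨H, hH⟩ := hallJ bj₀ hbj₀
      obtain ⟨u₁, v₁, hEq, hu₁, hallb, hv₁⟩ := bchar_of hH _ rfl
      rcases hv₁ with rfl | ⟨l, w₁, G₀, rfl, hmemG₀, hb0⟩
      · rw [List.append_nil] at hEq
        subst hEq
        have hall1 := V1 _ hu₁ hallJ
        refine steps_of_bchar' (v := []) (by simp) hu₁ ?_ (Or.inl rfl)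
        exact allconst (Global.branch r s bsJ) _
          (steps_of_bchar' (v := []) (by simp) hu hall1 (Or.inl rfl))
      · -- u = u₁ ++ gPQ l :: w₁
        obtain ⟨hl, -⟩ := memMapB hmemG₀
        subst hEq
        have hV2 := V2 u₁ w₁ l hu₁ hallJ
        rw [List.forall_mem_append, List.forall_mem_cons] at hu
        refine steps_of_bchar' (u := u₁) (v := Pref.mk p q (.lab l) :: w₁)
          (by simp) hu₁ ?_ ?_
        · exact allconst (Global.branch r s bsJ) u₁
            (steps_of_bchar' (u := u₁) (v := []) (by simp) hu.1
              (fun bj hbj => (hV2 bj hbj).1) (Or.inl rfl))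
        · refine Or.inr ⟨l, w₁, Global.branch r s bsJ, rfl, List.mem_map_of_mem hl, ?_⟩
          refine steps_of_bchar' (u := u₁ ++ w₁) (v := []) (by simp) ?_
            (fun bj hbj => (hV2 bj hbj).2) (Or.inl rfl)
          rw [List.forall_mem_append]
          exact ⟨hu.1, hu.2.2⟩
    · -- v = gRS l' :: w
      obtain ⟨c, hc, rfl⟩ := memMap2 hmemX
      obtain ⟨H, hH⟩ := hXw
      obtain ⟨u₁, v₁, hEq, hu₁, hallb, hv₁⟩ := bchar_of hH _ rfl
      have hcu₁ : HasTr c u₁ := hallb (l₀, c) (List.mem_map_of_mem hl₀)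
      rcases hv₁ with rfl | ⟨l, w₁, G₀, rfl, hmemG₀, hcw⟩
      · rw [List.append_nil] at hEq
        have hx : ∀ g ∈ u ++ w, g.pid ∩ ({p, q} : Set ℕ) = ∅ := by
          rw [hEq]; exact hu₁
        rw [List.forall_mem_append] at hx
        have hall1 := V1 u hx.1 hallJ
        refine steps_of_bchar' (u := u ++ Pref.mk r s (.lab l') :: w) (v := [])
          (by simp) ?_ ?_ (Or.inl rfl)
        · rw [List.forall_mem_append, List.forall_mem_cons]
          exact ⟨hx.1, hpidRS _, hx.2⟩
        · refine allconst (Global.branch r s bsJ) _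
            (steps_of_bchar' (u := u) (v := Pref.mk r s (.lab l') :: w) rfl hu hall1 ?_)
          exact Or.inr ⟨l', w, c, rfl, hc, hasTr_cast hEq hcu₁⟩
      · obtain ⟨hl, hG₀⟩ := memMapB hmemG₀
        rw [hG₀] at hcw
        rcases list_split hEq with ⟨m, ht1, ht2⟩ | ⟨m, ht1, ht2⟩
        · -- gPQ in w : u₁ = u ++ m, w = m ++ gPQ::w₁
          subst ht1; subst ht2
          rw [List.forall_mem_append] at hu₁
          have hall1 := V1 u hu₁.1 hallJ
          refine steps_of_bchar' (u := u ++ Pref.mk r s (.lab l') :: m)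
            (v := Pref.mk p q (.lab l) :: w₁) (by simp) ?_ ?_ ?_
          · rw [List.forall_mem_append, List.forall_mem_cons]
            exact ⟨hu₁.1, hpidRS _, hu₁.2⟩
          · refine allconst (Global.branch r s bsJ) _
              (steps_of_bchar' (u := u) (v := Pref.mk r s (.lab l') :: m) rfl hu hall1 ?_)
            exact Or.inr ⟨l', m, c, rfl, hc, hcu₁⟩
          · refine Or.inr ⟨l, w₁, Global.branch r s bsJ, rfl, List.mem_map_of_mem hl, ?_⟩
            refine steps_of_bchar' (u := u) (v := Pref.mk r s (.lab l') :: (m ++ w₁))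
              (by simp) hu hall1 ?_
            exact Or.inr ⟨l', m ++ w₁, c, rfl, hc, hasTr_cast (by simp) hcw⟩
        · -- gPQ in u : u = u₁ ++ gPQ::m, w₁ = m ++ w
          subst ht1; subst ht2
          have hV2 := V2 u₁ m l hu₁ hallJ
          rw [List.forall_mem_append, List.forall_mem_cons] at hu
          refine steps_of_bchar' (u := u₁)
            (v := Pref.mk p q (.lab l) :: (m ++ Pref.mk r s (.lab l') :: w))
            (by simp) hu₁ ?_ ?_
          · exact allconst (Global.branch r s bsJ) u₁
              (steps_of_bchar' (u := u₁) (v := []) (by simp) hu.1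
                (fun bj hbj => (hV2 bj hbj).1) (Or.inl rfl))
          · refine Or.inr ⟨l, m ++ Pref.mk r s (.lab l') :: w, Global.branch r s bsJ, rfl,
              List.mem_map_of_mem hl, ?_⟩
            refine steps_of_bchar' (u := u₁ ++ m) (v := Pref.mk r s (.lab l') :: w)
              (by simp) ?_ (fun bj hbj => (hV2 bj hbj).2) ?_
            · rw [List.forall_mem_append]
              exact ⟨hu.1, hu.2.2⟩
            · exact Or.inr ⟨l', w, c, rfl, hc, hasTr_cast (by simp) hcw⟩
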